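/- arXiv:1505.07905 — 3 statements merged into one kernel-verified Lean document; each statement's English description precedes it below -/
import Mathlib

section
/- If J is an invertible guaranteed scoring game (there exists J' with J + J' ∼ 0), then G + J ≽ H + J if and only if G ≽ H. -/
/-- A scoring game: `la`/`ra` are the atom values (relevant when the
corresponding option list is empty), `L`/`R` the Left and Right options. -/
inductive SG : Type
  | mk (la ra : ℝ) (L R : List SG) : SG

namespace SG

theorem sizeOf_lt_of_mem {g : SG} {l : List SG} (h : g ∈ l) : sizeOf g < sizeOf l :=
  List.sizeOf_lt_of_mem h

noncomputable instance : DecidableEq SG := Classical.decEq _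

def la : SG → ℝ | mk a _ _ _ => a
def ra : SG → ℝ | mk _ b _ _ => b
def L : SG → List SG | mk _ _ l _ => l
def R : SG → List SG | mk _ _ _ r => r

/-- The list of atom values occurring in atomic followers of a game. -/
def atomList : SG → List ℝ
  | mk a b ls rs =>
    (if ls.isEmpty then [a] else (ls.attach.map (fun x => atomList x.1)).flatten)
    ++ (if rs.isEmpty then [b] else (rs.attach.map (fun x => atomList x.1)).flatten)
decreasing_by all_goals (simp only [SG.mk.sizeOf_spec]; (first | (have := sizeOf_lt_of_mem x.2) | (have := sizeOf_lt_of_mem (by assumption : x ∈ _))); omega)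

/-- The guaranteed condition. -/
def Guaranteed : SG → Prop
  | mk a b ls rs =>
    (∀ x ∈ ls, Guaranteed x) ∧ (∀ x ∈ rs, Guaranteed x) ∧
    (ls = [] → ∀ s ∈ (mk a b ls rs).atomList, a ≤ s) ∧
    (rs = [] → ∀ s ∈ (mk a b ls rs).atomList, s ≤ b)
decreasing_by all_goals (simp only [SG.mk.sizeOf_spec]; (first | (have := sizeOf_lt_of_mem x.2) | (have := sizeOf_lt_of_mem (by assumption : x ∈ _))); omega)

/-- Disjunctive sum. -/
noncomputable def add : SG → SG → SG
  | mk a1 b1 L1 R1, mk a2 b2 L2 R2 =>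
    mk (a1 + a2) (b1 + b2)
      (L1.attach.map (fun x => add x.1 (mk a2 b2 L2 R2))
        ++ L2.attach.map (fun x => add (mk a1 b1 L1 R1) x.1))
      (R1.attach.map (fun x => add x.1 (mk a2 b2 L2 R2))
        ++ R2.attach.map (fun x => add (mk a1 b1 L1 R1) x.1))
termination_by g h => sizeOf g + sizeOf h
decreasing_by all_goals (simp only [SG.mk.sizeOf_spec]; (first | (have := sizeOf_lt_of_mem x.2) | (have := sizeOf_lt_of_mem (by assumption : x ∈ _))); omega)

/-- Left- and Right-stops (as a pair). -/
noncomputable def stops : SG → ℝ × ℝ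
  | mk a b ls rs =>
    (if ls.isEmpty then a else ((ls.attach.map (fun x => (stops x.1).2)).maximum.unbotD 0),
     if rs.isEmpty then b else ((rs.attach.map (fun x => (stops x.1).1)).minimum.untopD 0))
decreasing_by all_goals (simp only [SG.mk.sizeOf_spec]; (first | (have := sizeOf_lt_of_mem x.2) | (have := sizeOf_lt_of_mem (by assumption : x ∈ _))); omega)

noncomputable def Ls (g : SG) : ℝ := g.stops.1
noncomputable def Rs (g : SG) : ℝ := g.stops.2

/-- The conjugate: interchange Left and Right and negate atoms. -/
noncomputable def conj : SG → SG
  | mk a b ls rs =>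
    mk (-b) (-a) (rs.attach.map (fun x => conj x.1)) (ls.attach.map (fun x => conj x.1))
decreasing_by all_goals (simp only [SG.mk.sizeOf_spec]; (first | (have := sizeOf_lt_of_mem x.2) | (have := sizeOf_lt_of_mem (by assumption : x ∈ _))); omega)

/-- The game ⟨∅^s | ∅^s⟩ of a real number `s`. -/
def num (s : ℝ) : SG := mk s s [] []

/-- The zero game ⟨∅^0 | ∅^0⟩. -/
def zero : SG := num 0

/-- Waiting moves: the image of the Normal-play integer `n`. -/
def wait : ℕ → SG
  | 0 => zero
  | n + 1 => mk 0 0 [wait n] []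

/-- Birthday: the depth of the game tree. -/
def birthday : SG → ℕ
  | mk _ _ ls rs =>
    max ((ls.attach.map (fun x => birthday x.1 + 1)).maximum.unbotD 0)
        ((rs.attach.map (fun x => birthday x.1 + 1)).maximum.unbotD 0)
decreasing_by all_goals (simp only [SG.mk.sizeOf_spec]; (first | (have := sizeOf_lt_of_mem x.2) | (have := sizeOf_lt_of_mem (by assumption : x ∈ _))); omega)

/-- `Ge G H` is the order `G ≽ H`. -/
def Ge (G H : SG) : Prop :=
  ∀ X : SG, X.Guaranteed → Ls (G.add X) ≥ Ls (H.add X) ∧ Rs (G.add X) ≥ Rs (H.add X)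

/-- Equivalence `G ∼ H`. -/
def Equiv (G H : SG) : Prop := Ge G H ∧ Ge H G

/-- Right's pass-allowed Left-stop `L̲s(G) = min_n Ls(G - n̂)`. -/
noncomputable def lsU (G : SG) : ℝ := ⨅ n : ℕ, Ls (G.add (wait n).conj)

/-- Left's pass-allowed Right-stop `R̄s(G) = max_n Rs(G + n̂)`. -/
noncomputable def rsO (G : SG) : ℝ := ⨆ n : ℕ, Rs (G.add (wait n))

/-- `L̄s(G) = max_n Ls(G + n̂)`. -/
noncomputable def lsO (G : SG) : ℝ := ⨆ n : ℕ, Ls (G.add (wait n))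

/-- `R̲s(G) = min_n Rs(G + n̂)`. -/
noncomputable def rsU (G : SG) : ℝ := ⨅ n : ℕ, Rs (G.add (wait n))

/-- Identity of games: same tree structure (up to reordering of options),
with identical atoms at atomic positions. -/
def Ident : SG → SG → Prop
  | mk a1 b1 L1 R1, mk a2 b2 L2 R2 =>
    (L1 = [] ↔ L2 = []) ∧ (L1 = [] → a1 = a2) ∧
    (R1 = [] ↔ R2 = []) ∧ (R1 = [] → b1 = b2) ∧
    (∀ x ∈ L1, ∃ y : {z // z ∈ L2}, Ident x y.1) ∧
    (∀ y ∈ L2, ∃ x : {z // z ∈ L1}, Ident x.1 y) ∧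
    (∀ x ∈ R1, ∃ y : {z // z ∈ R2}, Ident x y.1) ∧
    (∀ y ∈ R2, ∃ x : {z // z ∈ R1}, Ident x.1 y)
termination_by g h => sizeOf g
decreasing_by all_goals (simp only [SG.mk.sizeOf_spec]; (first | (have := sizeOf_lt_of_mem x.2) | (have := sizeOf_lt_of_mem (by assumption : x ∈ _))); omega)

/-- `Linked H G`: `H` is linked to `G` (by some guaranteed `T`). -/
def Linked (H G : SG) : Prop :=
  ∃ T : SG, T.Guaranteed ∧ Ls (H.add T) < 0 ∧ 0 < Rs (G.add T)

/-- Replace every atom of `G` by `∅^x`. -/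
def subst (v : ℝ) : SG → SG
  | mk _ _ ls rs =>
    mk v v (ls.attach.map (fun x => subst v x.1)) (rs.attach.map (fun x => subst v x.1))
decreasing_by all_goals (simp only [SG.mk.sizeOf_spec]; (first | (have := sizeOf_lt_of_mem x.2) | (have := sizeOf_lt_of_mem (by assumption : x ∈ _))); omega)

/-- The maximum atom value in `G`. -/
noncomputable def maxAtom (G : SG) : ℝ := G.atomList.maximum.unbotD 0

/-- The minimum atom value in `G`. -/
noncomputable def minAtom (G : SG) : ℝ := G.atomList.minimum.untopD 0

/-! ### Auxiliary lemmas -/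

theorem sizeOf_lt_of_mem_L {x G : SG} (h : x ∈ G.L) : sizeOf x < sizeOf G := by
  cases G with
  | mk a b ls rs =>
    have := sizeOf_lt_of_mem h
    simp only [SG.mk.sizeOf_spec]; simp only [L] at this; omega

theorem sizeOf_lt_of_mem_R {x G : SG} (h : x ∈ G.R) : sizeOf x < sizeOf G := by
  cases G with
  | mk a b ls rs =>
    have := sizeOf_lt_of_mem h
    simp only [SG.mk.sizeOf_spec]; simp only [R] at this; omega

theorem maximum_perm {l1 l2 : List ℝ} (h : l1.Perm l2) : l1.maximum = l2.maximum := by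
  induction h with
  | nil => rfl
  | cons x _ ih => rw [List.maximum_cons, List.maximum_cons, ih]
  | swap x y l =>
      rw [List.maximum_cons, List.maximum_cons, List.maximum_cons, List.maximum_cons,
        max_left_comm]
  | trans _ _ ih1 ih2 => rw [ih1, ih2]

theorem minimum_perm {l1 l2 : List ℝ} (h : l1.Perm l2) : l1.minimum = l2.minimum := by
  induction h with
  | nil => rfl
  | cons x _ ih => rw [List.minimum_cons, List.minimum_cons, ih]
  | swap x y l =>
      rw [List.minimum_cons, List.minimum_cons, List.minimum_cons, List.minimum_cons,
        min_left_comm]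
  | trans _ _ ih1 ih2 => rw [ih1, ih2]

theorem add_eq (G H : SG) : G.add H =
    mk (G.la + H.la) (G.ra + H.ra)
      (G.L.map (fun x => x.add H) ++ H.L.map (fun y => G.add y))
      (G.R.map (fun x => x.add H) ++ H.R.map (fun y => G.add y)) := by
  cases G with
  | mk a1 b1 L1 R1 =>
    cases H with
    | mk a2 b2 L2 R2 =>
      rw [add]
      simp [la, ra, L, R, List.attach_map_val]

theorem L_add (G H : SG) : (G.add H).L =
    G.L.map (fun x => x.add H) ++ H.L.map (fun y => G.add y)     := by rw [add_eq]; rfl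
theorem R_add (G H : SG) : (G.add H).R =
    G.R.map (fun x => x.add H) ++ H.R.map (fun y => G.add y)     := by rw [add_eq]; rfl
theorem la_add (G H : SG) : (G.add H).la = G.la + H.la     := by rw [add_eq]; rfl
theorem ra_add (G H : SG) : (G.add H).ra = G.ra + H.ra     := by rw [add_eq]; rfl

theorem map_L_add (G H : SG) (f : SG → ℝ) : ((G.add H).L).map f =
    G.L.map (fun x => f (x.add H)) ++ H.L.map (fun y => f (G.add y)) := by
  simp only [L_add, List.map_append, List.map_map]; rfl

theorem map_R_add (G H : SG) (f : SG → ℝ) : ((G.add H).R).map f =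
    G.R.map (fun x => f (x.add H)) ++ H.R.map (fun y => f (G.add y)) := by
  simp only [R_add, List.map_append, List.map_map]; rfl

theorem stops_eq (G : SG) : G.stops =
    (if G.L.isEmpty then G.la else ((G.L.map Rs).maximum.unbotD 0),
     if G.R.isEmpty then G.ra else ((G.R.map Ls).minimum.untopD 0)) := by
  cases G with
  | mk a b ls rs =>
    rw [stops]
    rw [List.attach_map_val (l := ls) (f := fun x => x.stops.2), List.attach_map_val (l := rs) (f := fun x => x.stops.1)]
    rfl

theorem Ls_eq (G : SG) : Ls G = if G.L.isEmpty then G.la else ((G.L.map Rs).maximum.unbotD 0) := by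
  rw [Ls, stops_eq]

theorem Rs_eq (G : SG) : Rs G = if G.R.isEmpty then G.ra else ((G.R.map Ls).minimum.untopD 0) := by
  rw [Rs, stops_eq]

theorem Ls_congr {G G' : SG} (hla : G.la = G'.la) (hL : (G.L.map Rs).Perm (G'.L.map Rs)) :
    Ls G = Ls G' := by
  have hlen : G.L.length = G'.L.length := by simpa using hL.length_eq
  have he : G.L.isEmpty = G'.L.isEmpty := by
    cases e1 : G.L <;> cases e2 : G'.L <;> simp_all
  rw [Ls_eq, Ls_eq, hla, maximum_perm hL, he]

theorem Rs_congr {G G' : SG} (hra : G.ra = G'.ra) (hR : (G.R.map Ls).Perm (G'.R.map Ls)) :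
    Rs G = Rs G' := by
  have hlen : G.R.length = G'.R.length := by simpa using hR.length_eq
  have he : G.R.isEmpty = G'.R.isEmpty := by
    cases e1 : G.R <;> cases e2 : G'.R <;> simp_all
  rw [Rs_eq, Rs_eq, hra, minimum_perm hR, he]

theorem stops_ext {G G' : SG} (h1 : Ls G = Ls G') (h2 : Rs G = Rs G') : G.stops = G'.stops :=
  Prod.ext h1 h2

theorem Ls_of_stops {G G' : SG} (h : G.stops = G'.stops) : Ls G = Ls G' := congrArg Prod.fst h
theorem Rs_of_stops {G G' : SG} (h : G.stops = G'.stops) : Rs G = Rs G' := congrArg Prod.snd h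

/-- `0 + X` has the same stops as `X`. -/
theorem stops_zero_add (X : SG) : stops (zero.add X) = stops X := by
  have hL : ∀ x ∈ X.L, Rs (zero.add x) = Rs x := fun x hx =>
    Rs_of_stops (stops_zero_add x)
  have hR : ∀ x ∈ X.R, Ls (zero.add x) = Ls x := fun x hx =>
    Ls_of_stops (stops_zero_add x)
  apply stops_ext
  · apply Ls_congr
    · rw [la_add]; show 0 + X.la = X.la; ring
    · have : ((zero.add X).L).map Rs = X.L.map Rs := by
        rw [map_L_add]
        show ([] : List SG).map _ ++ _ = _
        rw [List.map_nil, List.nil_append]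
        exact List.map_congr_left hL
      rw [this]
  · apply Rs_congr
    · rw [ra_add]; show 0 + X.ra = X.ra; ring
    · have : ((zero.add X).R).map Ls = X.R.map Ls := by
        rw [map_R_add]
        show ([] : List SG).map _ ++ _ = _
        rw [List.map_nil, List.nil_append]
        exact List.map_congr_left hR
      rw [this]
termination_by sizeOf X
decreasing_by all_goals
  (first | (have := sizeOf_lt_of_mem_L (by assumption : _ ∈ SG.L _))
         | (have := sizeOf_lt_of_mem_R (by assumption : _ ∈ SG.R _))); omega

/-- Associativity of `add` at the level of stops. -/
theorem stops_add_assoc (A B C : SG) :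
    stops ((A.add B).add C) = stops (A.add (B.add C)) := by
  have hAL : ∀ x ∈ A.L, Rs ((x.add B).add C) = Rs (x.add (B.add C)) := fun x hx =>
    Rs_of_stops (stops_add_assoc x B C)
  have hBL : ∀ x ∈ B.L, Rs ((A.add x).add C) = Rs (A.add (x.add C)) := fun x hx =>
    Rs_of_stops (stops_add_assoc A x C)
  have hCL : ∀ x ∈ C.L, Rs ((A.add B).add x) = Rs (A.add (B.add x)) := fun x hx =>
    Rs_of_stops (stops_add_assoc A B x)
  have hAR : ∀ x ∈ A.R, Ls ((x.add B).add C) = Ls (x.add (B.add C)) := fun x hx =>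
    Ls_of_stops (stops_add_assoc x B C)
  have hBR : ∀ x ∈ B.R, Ls ((A.add x).add C) = Ls (A.add (x.add C)) := fun x hx =>
    Ls_of_stops (stops_add_assoc A x C)
  have hCR : ∀ x ∈ C.R, Ls ((A.add B).add x) = Ls (A.add (B.add x)) := fun x hx =>
    Ls_of_stops (stops_add_assoc A B x)
  apply stops_ext
  · apply Ls_congr
    · rw [la_add, la_add, la_add, la_add]; ring
    · have e : (((A.add B).add C).L).map Rs = ((A.add (B.add C)).L).map Rs := by
        simp only [map_L_add]
        rw [List.append_assoc]
        congr 1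
        · exact List.map_congr_left hAL
        congr 1
        · exact List.map_congr_left hBL
        · exact List.map_congr_left hCL
      rw [e]
  · apply Rs_congr
    · rw [ra_add, ra_add, ra_add, ra_add]; ring
    · have e : (((A.add B).add C).R).map Ls = ((A.add (B.add C)).R).map Ls := by
        simp only [map_R_add]
        rw [List.append_assoc]
        congr 1
        · exact List.map_congr_left hAR
        congr 1
        · exact List.map_congr_left hBR
        · exact List.map_congr_left hCR
      rw [e]
termination_by sizeOf A + sizeOf B + sizeOf C
decreasing_by all_goals
  (first | (have := sizeOf_lt_of_mem_L (by assumption : _ ∈ SG.L _))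
         | (have := sizeOf_lt_of_mem_R (by assumption : _ ∈ SG.R _))); omega

/-- The key rearrangement: `(A+B)+(C+D)` has the same stops as `(B+C)+(A+D)`. -/
theorem stops_perm4 (A B C D : SG) :
    stops ((A.add B).add (C.add D)) = stops ((B.add C).add (A.add D)) := by
  have hAL : ∀ x ∈ A.L, Rs ((x.add B).add (C.add D)) = Rs ((B.add C).add (x.add D)) :=
    fun x hx => Rs_of_stops (stops_perm4 x B C D)
  have hBL : ∀ x ∈ B.L, Rs ((A.add x).add (C.add D)) = Rs ((x.add C).add (A.add D)) :=
    fun x hx => Rs_of_stops (stops_perm4 A x C D)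
  have hCL : ∀ x ∈ C.L, Rs ((A.add B).add (x.add D)) = Rs ((B.add x).add (A.add D)) :=
    fun x hx => Rs_of_stops (stops_perm4 A B x D)
  have hDL : ∀ x ∈ D.L, Rs ((A.add B).add (C.add x)) = Rs ((B.add C).add (A.add x)) :=
    fun x hx => Rs_of_stops (stops_perm4 A B C x)
  have hAR : ∀ x ∈ A.R, Ls ((x.add B).add (C.add D)) = Ls ((B.add C).add (x.add D)) :=
    fun x hx => Ls_of_stops (stops_perm4 x B C D)
  have hBR : ∀ x ∈ B.R, Ls ((A.add x).add (C.add D)) = Ls ((x.add C).add (A.add D)) :=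
    fun x hx => Ls_of_stops (stops_perm4 A x C D)
  have hCR : ∀ x ∈ C.R, Ls ((A.add B).add (x.add D)) = Ls ((B.add x).add (A.add D)) :=
    fun x hx => Ls_of_stops (stops_perm4 A B x D)
  have hDR : ∀ x ∈ D.R, Ls ((A.add B).add (C.add x)) = Ls ((B.add C).add (A.add x)) :=
    fun x hx => Ls_of_stops (stops_perm4 A B C x)
  apply stops_ext
  · apply Ls_congr
    · rw [la_add, la_add, la_add, la_add, la_add, la_add]; ring
    · have e1 : ((((A.add B)).add (C.add D)).L).map Rs =
          (A.L.map (fun x => Rs ((B.add C).add (x.add D))) ++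
           B.L.map (fun x => Rs ((x.add C).add (A.add D)))) ++
          (C.L.map (fun x => Rs ((B.add x).add (A.add D))) ++
           D.L.map (fun x => Rs ((B.add C).add (A.add x)))) := by
        simp only [map_L_add]
        congr 1
        · congr 1
          · exact List.map_congr_left hAL
          · exact List.map_congr_left hBL
        · congr 1
          · exact List.map_congr_left hCL
          · exact List.map_congr_left hDL
      have e2 : ((((B.add C)).add (A.add D)).L).map Rs =
          (B.L.map (fun x => Rs ((x.add C).add (A.add D))) ++
           C.L.map (fun x => Rs ((B.add x).add (A.add D)))) ++
          (A.L.map (fun x => Rs ((B.add C).add (x.add D))) ++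
           D.L.map (fun x => Rs ((B.add C).add (A.add x)))) := by
        simp only [map_L_add]
      rw [e1, e2]
      -- (a ++ b) ++ (c ++ d) ~ (b ++ c) ++ (a ++ d)
      generalize A.L.map (fun x => Rs ((B.add C).add (x.add D))) = a
      generalize B.L.map (fun x => Rs ((x.add C).add (A.add D))) = b
      generalize C.L.map (fun x => Rs ((B.add x).add (A.add D))) = c
      generalize D.L.map (fun x => Rs ((B.add C).add (A.add x))) = d
      have h1 : (a ++ b) ++ (c ++ d) = (a ++ (b ++ c)) ++ d := by simp
      have h2 : (b ++ c) ++ (a ++ d) = ((b ++ c) ++ a) ++ d := by simp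
      rw [h1, h2]
      exact (List.perm_append_comm).append_right d
  · apply Rs_congr
    · rw [ra_add, ra_add, ra_add, ra_add, ra_add, ra_add]; ring
    · have e1 : ((((A.add B)).add (C.add D)).R).map Ls =
          (A.R.map (fun x => Ls ((B.add C).add (x.add D))) ++
           B.R.map (fun x => Ls ((x.add C).add (A.add D)))) ++
          (C.R.map (fun x => Ls ((B.add x).add (A.add D))) ++
           D.R.map (fun x => Ls ((B.add C).add (A.add x)))) := by
        simp only [map_R_add]
        congr 1
        · congr 1
          · exact List.map_congr_left hAR
          · exact List.map_congr_left hBR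
        · congr 1
          · exact List.map_congr_left hCR
          · exact List.map_congr_left hDR
      have e2 : ((((B.add C)).add (A.add D)).R).map Ls =
          (B.R.map (fun x => Ls ((x.add C).add (A.add D))) ++
           C.R.map (fun x => Ls ((B.add x).add (A.add D)))) ++
          (A.R.map (fun x => Ls ((B.add C).add (x.add D))) ++
           D.R.map (fun x => Ls ((B.add C).add (A.add x)))) := by
        simp only [map_R_add]
      rw [e1, e2]
      generalize A.R.map (fun x => Ls ((B.add C).add (x.add D))) = a
      generalize B.R.map (fun x => Ls ((x.add C).add (A.add D))) = b
      generalize C.R.map (fun x => Ls ((B.add x).add (A.add D))) = c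
      generalize D.R.map (fun x => Ls ((B.add C).add (A.add x))) = d
      have h1 : (a ++ b) ++ (c ++ d) = (a ++ (b ++ c)) ++ d := by simp
      have h2 : (b ++ c) ++ (a ++ d) = ((b ++ c) ++ a) ++ d := by simp
      rw [h1, h2]
      exact (List.perm_append_comm).append_right d
termination_by sizeOf A + sizeOf B + sizeOf C + sizeOf D
decreasing_by all_goals
  (first | (have := sizeOf_lt_of_mem_L (by assumption : _ ∈ SG.L _))
         | (have := sizeOf_lt_of_mem_R (by assumption : _ ∈ SG.R _))); omega

theorem atomList_eq (G : SG) : G.atomList =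
    (if G.L.isEmpty then [G.la] else (G.L.map atomList).flatten)
    ++ (if G.R.isEmpty then [G.ra] else (G.R.map atomList).flatten) := by
  cases G with
  | mk a b ls rs =>
    rw [atomList]
    rw [List.attach_map_val (l := ls) (f := atomList), List.attach_map_val (l := rs) (f := atomList)]
    rfl

theorem la_mem_atomList {G : SG} (h : G.L = []) : G.la ∈ G.atomList := by
  rw [atomList_eq, h]; simp

theorem ra_mem_atomList {G : SG} (h : G.R = []) : G.ra ∈ G.atomList := by
  rw [atomList_eq, h]; simp

theorem mem_atomList_of_mem_L {x G : SG} (hx : x ∈ G.L) {s : ℝ} (hs : s ∈ x.atomList) :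
    s ∈ G.atomList := by
  rw [atomList_eq]
  have hne : G.L.isEmpty = false := by
    cases e : G.L with
    | nil => rw [e] at hx; simp at hx
    | cons _ _ => rfl
  rw [hne]
  simp only [Bool.false_eq_true, if_false]
  refine List.mem_append.2 (Or.inl ?_)
  exact List.mem_flatten.2 ⟨x.atomList, List.mem_map.2 ⟨x, hx, rfl⟩, hs⟩

theorem mem_atomList_of_mem_R {x G : SG} (hx : x ∈ G.R) {s : ℝ} (hs : s ∈ x.atomList) :
    s ∈ G.atomList := by
  rw [atomList_eq]
  have hne : G.R.isEmpty = false := by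
    cases e : G.R with
    | nil => rw [e] at hx; simp at hx
    | cons _ _ => rfl
  rw [hne]
  simp only [Bool.false_eq_true, if_false]
  refine List.mem_append.2 (Or.inr ?_)
  exact List.mem_flatten.2 ⟨x.atomList, List.mem_map.2 ⟨x, hx, rfl⟩, hs⟩

theorem mem_atomList_add {G H : SG} {s : ℝ} (h : s ∈ (G.add H).atomList) :
    ∃ u ∈ G.atomList, ∃ v ∈ H.atomList, s = u + v := by
  rw [atomList_eq] at h
  rcases List.mem_append.1 h with h | h
  · by_cases hL : (G.add H).L.isEmpty
    · rw [if_pos hL] at h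
      simp only [List.mem_singleton] at h
      rw [L_add] at hL
      simp only [List.isEmpty_iff, List.append_eq_nil_iff, List.map_eq_nil_iff] at hL
      exact ⟨G.la, la_mem_atomList hL.1, H.la, la_mem_atomList hL.2, by rw [h, la_add]⟩
    · rw [if_neg hL] at h
      obtain ⟨l, hl, hs⟩ := List.mem_flatten.1 h
      obtain ⟨c, hc, rfl⟩ := List.mem_map.1 hl
      rw [L_add] at hc
      rcases List.mem_append.1 hc with hc | hc
      · obtain ⟨x, hx, rfl⟩ := List.mem_map.1 hc
        obtain ⟨u, hu, v, hv, rfl⟩ := mem_atomList_add hs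
        exact ⟨u, mem_atomList_of_mem_L hx hu, v, hv, rfl⟩
      · obtain ⟨y, hy, rfl⟩ := List.mem_map.1 hc
        obtain ⟨u, hu, v, hv, rfl⟩ := mem_atomList_add hs
        exact ⟨u, hu, v, mem_atomList_of_mem_L hy hv, rfl⟩
  · by_cases hR : (G.add H).R.isEmpty
    · rw [if_pos hR] at h
      simp only [List.mem_singleton] at h
      rw [R_add] at hR
      simp only [List.isEmpty_iff, List.append_eq_nil_iff, List.map_eq_nil_iff] at hR
      exact ⟨G.ra, ra_mem_atomList hR.1, H.ra, ra_mem_atomList hR.2, by rw [h, ra_add]⟩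
    · rw [if_neg hR] at h
      obtain ⟨l, hl, hs⟩ := List.mem_flatten.1 h
      obtain ⟨c, hc, rfl⟩ := List.mem_map.1 hl
      rw [R_add] at hc
      rcases List.mem_append.1 hc with hc | hc
      · obtain ⟨x, hx, rfl⟩ := List.mem_map.1 hc
        obtain ⟨u, hu, v, hv, rfl⟩ := mem_atomList_add hs
        exact ⟨u, mem_atomList_of_mem_R hx hu, v, hv, rfl⟩
      · obtain ⟨y, hy, rfl⟩ := List.mem_map.1 hc
        obtain ⟨u, hu, v, hv, rfl⟩ := mem_atomList_add hs
        exact ⟨u, hu, v, mem_atomList_of_mem_R hy hv, rfl⟩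
termination_by sizeOf G + sizeOf H
decreasing_by all_goals
  (first | (have := sizeOf_lt_of_mem_L (by assumption : _ ∈ SG.L _))
         | (have := sizeOf_lt_of_mem_R (by assumption : _ ∈ SG.R _))); omega

theorem guaranteed_iff (G : SG) : Guaranteed G ↔
    ((∀ x ∈ G.L, Guaranteed x) ∧ (∀ x ∈ G.R, Guaranteed x) ∧
      (G.L = [] → ∀ s ∈ G.atomList, G.la ≤ s) ∧
      (G.R = [] → ∀ s ∈ G.atomList, s ≤ G.ra)) := by
  cases G with
  | mk a b ls rs =>
    rw [Guaranteed]
    simp only [la, ra, L, R]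

theorem Guaranteed.add {G H : SG} (hG : G.Guaranteed) (hH : H.Guaranteed) :
    (G.add H).Guaranteed := by
  have hG' := (guaranteed_iff G).1 hG
  have hH' := (guaranteed_iff H).1 hH
  rw [guaranteed_iff]
  refine ⟨?_, ?_, ?_, ?_⟩
  · intro c hc
    rw [L_add] at hc
    rcases List.mem_append.1 hc with hc | hc
    · obtain ⟨x, hx, rfl⟩ := List.mem_map.1 hc
      exact Guaranteed.add (hG'.1 x hx) hH
    · obtain ⟨y, hy, rfl⟩ := List.mem_map.1 hc
      exact Guaranteed.add hG (hH'.1 y hy)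
  · intro c hc
    rw [R_add] at hc
    rcases List.mem_append.1 hc with hc | hc
    · obtain ⟨x, hx, rfl⟩ := List.mem_map.1 hc
      exact Guaranteed.add (hG'.2.1 x hx) hH
    · obtain ⟨y, hy, rfl⟩ := List.mem_map.1 hc
      exact Guaranteed.add hG (hH'.2.1 y hy)
  · intro hnil s hs
    rw [L_add, List.append_eq_nil_iff] at hnil
    obtain ⟨h1, h2⟩ := hnil
    rw [List.map_eq_nil_iff] at h1 h2
    obtain ⟨u, hu, v, hv, rfl⟩ := mem_atomList_add hs
    rw [la_add]
    exact add_le_add (hG'.2.2.1 h1 u hu) (hH'.2.2.1 h2 v hv)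
  · intro hnil s hs
    rw [R_add, List.append_eq_nil_iff] at hnil
    obtain ⟨h1, h2⟩ := hnil
    rw [List.map_eq_nil_iff] at h1 h2
    obtain ⟨u, hu, v, hv, rfl⟩ := mem_atomList_add hs
    rw [ra_add]
    exact add_le_add (hG'.2.2.2 h1 u hu) (hH'.2.2.2 h2 v hv)
termination_by sizeOf G + sizeOf H
decreasing_by all_goals
  (first | (have := sizeOf_lt_of_mem_L (by assumption : _ ∈ SG.L _))
         | (have := sizeOf_lt_of_mem_R (by assumption : _ ∈ SG.R _))); omega

theorem stops_eq_of_equiv_zero {A : SG} (hE : Equiv A zero) {Y : SG} (hY : Y.Guaranteed) :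
    stops (A.add Y) = stops Y := by
  have h1 := hE.1 Y hY
  have h2 := hE.2 Y hY
  have hz := stops_zero_add Y
  have hzL : Ls (zero.add Y) = Ls Y := Ls_of_stops hz
  have hzR : Rs (zero.add Y) = Rs Y := Rs_of_stops hz
  apply stops_ext
  · rw [← hzL]; exact le_antisymm h2.1 h1.1
  · rw [← hzR]; exact le_antisymm h2.2 h1.2

/-- If `J` is invertible then `G + J ≽ H + J ↔ G ≽ H`. -/
theorem ge_add_iff_of_invertible (G H J : SG) (hG : G.Guaranteed)
    (hH : H.Guaranteed) (hJ : J.Guaranteed)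
    (hinv : ∃ J' : SG, J'.Guaranteed ∧ Equiv (J.add J') zero) :
    (G.add J).Ge (H.add J) ↔ G.Ge H := by
  obtain ⟨J', hJ', hE⟩ := hinv
  constructor
  · intro h X hX
    have h1 := h (J'.add X) (hJ'.add hX)
    have eG : stops ((G.add J).add (J'.add X)) = stops (G.add X) :=
      (stops_perm4 G J J' X).trans (stops_eq_of_equiv_zero hE (hG.add hX))
    have eH : stops ((H.add J).add (J'.add X)) = stops (H.add X) :=
      (stops_perm4 H J J' X).trans (stops_eq_of_equiv_zero hE (hH.add hX))
    constructor
    · rw [← Ls_of_stops eG, ← Ls_of_stops eH]; exact h1.1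
    · rw [← Rs_of_stops eG, ← Rs_of_stops eH]; exact h1.2
  · intro h X hX
    have h1 := h (J.add X) (hJ.add hX)
    have eG : stops ((G.add J).add X) = stops (G.add (J.add X)) := stops_add_assoc G J X
    have eH : stops ((H.add J).add X) = stops (H.add (J.add X)) := stops_add_assoc H J X
    constructor
    · rw [Ls_of_stops eG, Ls_of_stops eH]; exact h1.1
    · rw [Rs_of_stops eG, Rs_of_stops eH]; exact h1.2

end SG
end

section
/- Domination: if G is a guaranteed scoring game with Left options A, B ∈ G^L satisfying A ≼ B, then H = ⟨G^L \ {A} | G^R⟩ is guaranteed and G ∼ H. -/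
namespace SG

lemma add_mk (a b a' b' : ℝ) (ls rs ls' rs' : List SG) :
    (mk a b ls rs).add (mk a' b' ls' rs') = mk (a + a') (b + b')
      (ls.map (fun x => x.add (mk a' b' ls' rs')) ++ ls'.map (fun x => (mk a b ls rs).add x))
      (rs.map (fun x => x.add (mk a' b' ls' rs')) ++ rs'.map (fun x => (mk a b ls rs).add x)) := by
  rw [add]; simp

lemma Ls_mk (a b : ℝ) (ls rs : List SG) :
    Ls (mk a b ls rs) = if ls.isEmpty then a else ((ls.map Rs).maximum.unbotD 0) := by
  show (stops _).1 = _
  rw [stops]; simp only [List.map_subtype, List.unattach_attach]; rfl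

lemma Rs_mk (a b : ℝ) (ls rs : List SG) :
    Rs (mk a b ls rs) = if rs.isEmpty then b else ((rs.map Ls).minimum.untopD 0) := by
  show (stops _).2 = _
  rw [stops]; simp only [List.map_subtype, List.unattach_attach]; rfl

lemma maxList_le {l1 l2 : List ℝ} (h1 : l1 ≠ []) (h2 : l2 ≠ [])
    (hd : ∀ x ∈ l1, ∃ y ∈ l2, x ≤ y) :
    l1.maximum.unbotD 0 ≤ l2.maximum.unbotD 0 := by
  obtain ⟨m2, hm2, hm2m⟩ : ∃ m, l2.maximum = some m ∧ m ∈ l2 := by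
    cases hm : l2.maximum with
    | bot => exact absurd (List.maximum_eq_bot.mp hm) h2
    | coe m => exact ⟨m, rfl, List.maximum_mem hm⟩
  obtain ⟨m1, hm1, hm1m⟩ : ∃ m, l1.maximum = some m ∧ m ∈ l1 := by
    cases hm : l1.maximum with
    | bot => exact absurd (List.maximum_eq_bot.mp hm) h1
    | coe m => exact ⟨m, rfl, List.maximum_mem hm⟩
  obtain ⟨y, hy, hxy⟩ := hd m1 hm1m
  have := List.le_maximum_of_mem hy hm2
  rw [hm1, hm2]
  exact (by simpa using hxy.trans this : m1 ≤ m2)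

lemma minList_le {l1 l2 : List ℝ} (h1 : l1 ≠ []) (h2 : l2 ≠ [])
    (hd : ∀ y ∈ l2, ∃ x ∈ l1, x ≤ y) :
    l1.minimum.untopD 0 ≤ l2.minimum.untopD 0 := by
  obtain ⟨m2, hm2, hm2m⟩ : ∃ m, l2.minimum = some m ∧ m ∈ l2 := by
    cases hm : l2.minimum with
    | top => exact absurd (List.minimum_eq_top.mp hm) h2
    | coe m => exact ⟨m, rfl, List.minimum_mem hm⟩
  obtain ⟨m1, hm1, hm1m⟩ : ∃ m, l1.minimum = some m ∧ m ∈ l1 := by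
    cases hm : l1.minimum with
    | top => exact absurd (List.minimum_eq_top.mp hm) h1
    | coe m => exact ⟨m, rfl, List.minimum_mem hm⟩
  obtain ⟨x, hx, hxy⟩ := hd m2 hm2m
  have := List.minimum_le_of_mem hx hm1
  rw [hm1, hm2]
  have : m1 ≤ x := by simpa using this
  exact (by simpa using this.trans hxy : m1 ≤ m2)


theorem key (a b : ℝ) (ls rs : List SG) (A B : SG) (hA : A ∈ ls) (hB : B ∈ ls)
    (hne : B ≠ A) (hdom : B.Ge A) :
    ∀ X : SG, X.Guaranteed →
      Ls ((mk a b ls rs).add X) = Ls ((mk a b (ls.erase A) rs).add X) ∧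
      Rs ((mk a b ls rs).add X) = Rs ((mk a b (ls.erase A) rs).add X)
  | mk xa xb xL xR, hX => by
    have hXg : Guaranteed (mk xa xb xL xR) := hX
    rw [Guaranteed] at hX
    obtain ⟨hXL, hXR, -, -⟩ := hX
    have IHL : ∀ Y ∈ xL,
        Ls ((mk a b ls rs).add Y) = Ls ((mk a b (ls.erase A) rs).add Y) ∧
        Rs ((mk a b ls rs).add Y) = Rs ((mk a b (ls.erase A) rs).add Y) :=
      fun Y hY => key a b ls rs A B hA hB hne hdom Y (hXL Y hY)
    have IHR : ∀ Y ∈ xR,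
        Ls ((mk a b ls rs).add Y) = Ls ((mk a b (ls.erase A) rs).add Y) ∧
        Rs ((mk a b ls rs).add Y) = Rs ((mk a b (ls.erase A) rs).add Y) :=
      fun Y hY => key a b ls rs A B hA hB hne hdom Y (hXR Y hY)
    have hBe : B ∈ ls.erase A := (List.mem_erase_of_ne hne).mpr hB
    have hls : ls ≠ [] := List.ne_nil_of_mem hA
    have hen : ls.erase A ≠ [] := List.ne_nil_of_mem hBe
    have hdomX := hdom (mk xa xb xL xR) hXg
    constructor
    · -- Ls equality
      rw [add_mk, add_mk, Ls_mk, Ls_mk, if_neg (by simp [hls]), if_neg (by simp [hen])]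
      apply le_antisymm
      · apply maxList_le (by simp [hls]) (by simp [hen])
        intro x hx
        simp only [List.map_append, List.map_map, List.mem_append, List.mem_map,
          Function.comp] at hx ⊢
        rcases hx with ⟨c, hc, rfl⟩ | ⟨y, hy, rfl⟩
        · by_cases hcA : c = A
          · subst hcA
            exact ⟨Rs (B.add (mk xa xb xL xR)), Or.inl ⟨B, hBe, rfl⟩, hdomX.2⟩
          · exact ⟨Rs (c.add (mk xa xb xL xR)),
              Or.inl ⟨c, (List.mem_erase_of_ne hcA).mpr hc, rfl⟩, le_rfl⟩
        · exact ⟨Rs ((mk a b (ls.erase A) rs).add y), Or.inr ⟨y, hy, rfl⟩,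
            le_of_eq (IHL y hy).2⟩
      · apply maxList_le (by simp [hen]) (by simp [hls])
        intro x hx
        simp only [List.map_append, List.map_map, List.mem_append, List.mem_map,
          Function.comp] at hx ⊢
        rcases hx with ⟨c, hc, rfl⟩ | ⟨y, hy, rfl⟩
        · exact ⟨Rs (c.add (mk xa xb xL xR)), Or.inl ⟨c, List.mem_of_mem_erase hc, rfl⟩, le_rfl⟩
        · exact ⟨Rs ((mk a b ls rs).add y), Or.inr ⟨y, hy, rfl⟩, ge_of_eq (IHL y hy).2⟩
    · -- Rs equality
      rw [add_mk, add_mk, Rs_mk, Rs_mk]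
      by_cases h : rs = [] ∧ xR = []
      · obtain ⟨h1, h2⟩ := h; subst h1; subst h2; simp
      · have hne1 : ((rs.map (fun x => x.add (mk xa xb xL xR))
            ++ xR.map (fun x => (mk a b ls rs).add x))) ≠ [] := by
          intro hc
          rw [List.append_eq_nil_iff] at hc
          exact h ⟨List.map_eq_nil_iff.mp hc.1, List.map_eq_nil_iff.mp hc.2⟩
        have hne2 : ((rs.map (fun x => x.add (mk xa xb xL xR))
            ++ xR.map (fun x => (mk a b (ls.erase A) rs).add x))) ≠ [] := by
          intro hc
          rw [List.append_eq_nil_iff] at hc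
          exact h ⟨List.map_eq_nil_iff.mp hc.1, List.map_eq_nil_iff.mp hc.2⟩
        rw [if_neg (by simpa using hne1), if_neg (by simpa using hne2)]
        apply le_antisymm
        · apply minList_le (by simpa using hne1) (by simpa using hne2)
          intro y hy
          simp only [List.map_append, List.map_map, List.mem_append, List.mem_map,
            Function.comp] at hy ⊢
          rcases hy with ⟨c, hc, rfl⟩ | ⟨z, hz, rfl⟩
          · exact ⟨Ls (c.add (mk xa xb xL xR)), Or.inl ⟨c, hc, rfl⟩, le_rfl⟩
          · exact ⟨Ls ((mk a b ls rs).add z), Or.inr ⟨z, hz, rfl⟩, le_of_eq (IHR z hz).1⟩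
        · apply minList_le (by simpa using hne2) (by simpa using hne1)
          intro y hy
          simp only [List.map_append, List.map_map, List.mem_append, List.mem_map,
            Function.comp] at hy ⊢
          rcases hy with ⟨c, hc, rfl⟩ | ⟨z, hz, rfl⟩
          · exact ⟨Ls (c.add (mk xa xb xL xR)), Or.inl ⟨c, hc, rfl⟩, le_rfl⟩
          · exact ⟨Ls ((mk a b (ls.erase A) rs).add z), Or.inr ⟨z, hz, rfl⟩,
              ge_of_eq (IHR z hz).1⟩
termination_by X => sizeOf X
decreasing_by all_goals (simp only [SG.mk.sizeOf_spec]; (first | (have := sizeOf_lt_of_mem hY)); omega)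

/-- Domination: a dominated Left option may be removed. -/
theorem domination (G A B : SG) (hG : G.Guaranteed) (hA : A ∈ G.L) (hB : B ∈ G.L)
    (hne : B ≠ A) (hdom : B.Ge A) :
    (SG.mk G.la G.ra (G.L.erase A) G.R).Guaranteed ∧
      G.Equiv (SG.mk G.la G.ra (G.L.erase A) G.R) := by
  obtain ⟨a, b, ls, rs⟩ := G
  simp only [la, ra, L, R] at *
  have hBe : B ∈ ls.erase A := (List.mem_erase_of_ne hne).mpr hB
  have hen : ls.erase A ≠ [] := List.ne_nil_of_mem hBe
  have hls : ls ≠ [] := List.ne_nil_of_mem hA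
  rw [Guaranteed] at hG
  obtain ⟨hGL, hGR, -, hGb⟩ := hG
  have hsub : ∀ s ∈ (mk a b (ls.erase A) rs).atomList, s ∈ (mk a b ls rs).atomList := by
    intro s hs
    rw [atomList] at hs ⊢
    simp only [List.map_subtype, List.unattach_attach] at hs ⊢
    rw [if_neg (by simp [hen])] at hs
    rw [if_neg (by simp [hls])]
    rcases List.mem_append.mp hs with h | h
    · refine List.mem_append_left _ ?_
      rw [List.mem_flatten] at h ⊢
      obtain ⟨l, hl, hsl⟩ := h
      obtain ⟨c, hc, rfl⟩ := List.mem_map.mp hl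
      exact ⟨_, List.mem_map.mpr ⟨c, List.mem_of_mem_erase hc, rfl⟩, hsl⟩
    · exact List.mem_append_right _ h
  constructor
  · rw [Guaranteed]
    exact ⟨fun x hx => hGL x (List.mem_of_mem_erase hx), hGR,
      fun h => absurd h hen, fun h s hs => hGb h s (hsub s hs)⟩
  · constructor
    · intro X hX
      have k := key a b ls rs A B hA hB hne hdom X hX
      exact ⟨k.1.ge, k.2.ge⟩
    · intro X hX
      have k := key a b ls rs A B hA hB hne hdom X hX
      exact ⟨k.1.le, k.2.le⟩

end SG
end

section
/- Reversibility through a non-atomic reversing option: let G be a guaranteed scoring game with Left option A that is reversible through B ∈ A^R (i.e., B ≼ G); if B^L is nonempty, then G ∼ ⟨(G^L \ {A}) ∪ B^L | G^R⟩. -/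
namespace SG

/-! ### Auxiliary lemmas -/

theorem la_mk (a b : ℝ) (l r : List SG) : (mk a b l r).la = a := rfl
theorem ra_mk (a b : ℝ) (l r : List SG) : (mk a b l r).ra = b := rfl
theorem L_mk (a b : ℝ) (l r : List SG) : (mk a b l r).L = l := rfl
theorem R_mk (a b : ℝ) (l r : List SG) : (mk a b l r).R = r := rfl

theorem unbot'_max_mem {l : List ℝ} {a : ℝ} (ha : a ∈ l) : a ≤ l.maximum.unbotD 0 := by
  cases h : l.maximum with
  | bot => exact absurd h (List.maximum_ne_bot_of_ne_nil (List.ne_nil_of_mem ha))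
  | coe m =>
    have := List.le_maximum_of_mem' ha
    rw [h] at this
    simpa [WithBot.unbotD] using this

theorem unbot'_max_le {l : List ℝ} (hl : l ≠ []) {c : ℝ} (h : ∀ a ∈ l, a ≤ c) :
    l.maximum.unbotD 0 ≤ c := by
  cases hm : l.maximum with
  | bot => exact absurd hm (List.maximum_ne_bot_of_ne_nil hl)
  | coe m =>
    have hmem := List.maximum_mem hm
    simpa [WithBot.unbotD] using h m hmem

theorem untop'_min_mem {l : List ℝ} {a : ℝ} (ha : a ∈ l) : l.minimum.untopD 0 ≤ a := by
  cases h : l.minimum with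
  | top => exact absurd h (List.minimum_ne_top_of_ne_nil (List.ne_nil_of_mem ha))
  | coe m =>
    have := List.minimum_le_of_mem' ha
    rw [h] at this
    simpa [WithTop.untopD] using this

theorem le_untop'_min {l : List ℝ} (hl : l ≠ []) {c : ℝ} (h : ∀ a ∈ l, c ≤ a) :
    c ≤ l.minimum.untopD 0 := by
  cases hm : l.minimum with
  | top => exact absurd hm (List.minimum_ne_top_of_ne_nil hl)
  | coe m =>
    have hmem := List.minimum_mem hm
    simpa [WithTop.untopD] using h m hmem

theorem add_mk_s12 (a1 b1 : ℝ) (L1 R1 : List SG) (a2 b2 : ℝ) (L2 R2 : List SG) :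
    (mk a1 b1 L1 R1).add (mk a2 b2 L2 R2) =
      mk (a1 + a2) (b1 + b2)
        (L1.map (fun x => x.add (mk a2 b2 L2 R2)) ++ L2.map (fun x => (mk a1 b1 L1 R1).add x))
        (R1.map (fun x => x.add (mk a2 b2 L2 R2)) ++ R2.map (fun x => (mk a1 b1 L1 R1).add x)) := by
  rw [add]
  simp [List.attach_map_val]

theorem L_add_s12 (g h : SG) :
    (g.add h).L = g.L.map (fun x => x.add h) ++ h.L.map (fun x => g.add x) := by
  cases g; cases h; rw [add_mk_s12]; rfl

theorem R_add_s12 (g h : SG) :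
    (g.add h).R = g.R.map (fun x => x.add h) ++ h.R.map (fun x => g.add x) := by
  cases g; cases h; rw [add_mk_s12]; rfl

theorem la_add_s12 (g h : SG) : (g.add h).la = g.la + h.la := by
  cases g; cases h; rw [add_mk_s12]; rfl

theorem ra_add_s12 (g h : SG) : (g.add h).ra = g.ra + h.ra := by
  cases g; cases h; rw [add_mk_s12]; rfl

theorem Ls_def (g : SG) :
    Ls g = if g.L = [] then g.la else ((g.L.map Rs).maximum.unbotD 0) := by
  cases g with
  | mk a b l r =>
    rw [Ls, stops]
    simp only [L_mk, la_mk]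
    have h1 : l.attach.map (fun x => (stops x.1).2) = l.map Rs := List.attach_map_val (l := l) (f := Rs)
    rw [h1]
    by_cases h : l = [] <;> simp [h]

theorem Rs_def (g : SG) :
    Rs g = if g.R = [] then g.ra else ((g.R.map Ls).minimum.untopD 0) := by
  cases g with
  | mk a b l r =>
    rw [Rs, stops]
    simp only [R_mk, ra_mk]
    have h1 : r.attach.map (fun x => (stops x.1).1) = r.map Ls := List.attach_map_val (l := r) (f := Ls)
    rw [h1]
    by_cases h : r = [] <;> simp [h]

theorem Rs_le_Ls {x g : SG} (hx : x ∈ g.L) : Rs x ≤ Ls g := by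
  rw [Ls_def, if_neg (List.ne_nil_of_mem hx)]
  exact unbot'_max_mem (List.mem_map_of_mem (f := Rs) hx)

theorem Ls_le {g : SG} (hg : g.L ≠ []) {c : ℝ} (h : ∀ x ∈ g.L, Rs x ≤ c) : Ls g ≤ c := by
  rw [Ls_def, if_neg hg]
  refine unbot'_max_le (by simpa using hg) ?_
  rintro a ha
  obtain ⟨x, hx, rfl⟩ := List.mem_map.1 ha
  exact h x hx

theorem Rs_le {x g : SG} (hx : x ∈ g.R) : Rs g ≤ Ls x := by
  rw [Rs_def, if_neg (List.ne_nil_of_mem hx)]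
  exact untop'_min_mem (List.mem_map_of_mem (f := Ls) hx)

theorem le_Rs {g : SG} (hg : g.R ≠ []) {c : ℝ} (h : ∀ x ∈ g.R, c ≤ Ls x) : c ≤ Rs g := by
  rw [Rs_def, if_neg hg]
  refine le_untop'_min (by simpa using hg) ?_
  rintro a ha
  obtain ⟨x, hx, rfl⟩ := List.mem_map.1 ha
  exact h x hx

theorem Ls_atom {g : SG} (hg : g.L = []) : Ls g = g.la := by rw [Ls_def, if_pos hg]
theorem Rs_atom {g : SG} (hg : g.R = []) : Rs g = g.ra := by rw [Rs_def, if_pos hg]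

theorem Guaranteed.memL {g x : SG} (hg : g.Guaranteed) (hx : x ∈ g.L) : x.Guaranteed := by
  cases g with
  | mk a b l r =>
    rw [Guaranteed] at hg
    exact hg.1 x hx

theorem Guaranteed.memR {g x : SG} (hg : g.Guaranteed) (hx : x ∈ g.R) : x.Guaranteed := by
  cases g with
  | mk a b l r =>
    rw [Guaranteed] at hg
    exact hg.2.1 x hx


theorem sizeOf_L_lt {x g : SG} (h : x ∈ g.L) : sizeOf x < sizeOf g := by
  cases g with
  | mk a b l r =>
    have := sizeOf_lt_of_mem (show x ∈ l from h)
    simp only [SG.mk.sizeOf_spec]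
    omega

theorem sizeOf_R_lt {x g : SG} (h : x ∈ g.R) : sizeOf x < sizeOf g := by
  cases g with
  | mk a b l r =>
    have := sizeOf_lt_of_mem (show x ∈ r from h)
    simp only [SG.mk.sizeOf_spec]
    omega

theorem memL_addl {P C : SG} (X : SG) (hC : C ∈ P.L) : C.add X ∈ (P.add X).L := by
  rw [L_add_s12]; exact List.mem_append_left _ (List.mem_map_of_mem hC)

theorem memL_addr (P : SG) {Y X' : SG} (hX' : X' ∈ Y.L) : P.add X' ∈ (P.add Y).L := by
  rw [L_add_s12]; exact List.mem_append_right _ (List.mem_map_of_mem hX')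

theorem memR_addl {P C : SG} (X : SG) (hC : C ∈ P.R) : C.add X ∈ (P.add X).R := by
  rw [R_add_s12]; exact List.mem_append_left _ (List.mem_map_of_mem hC)

theorem memR_addr (P : SG) {Y X' : SG} (hX' : X' ∈ Y.R) : P.add X' ∈ (P.add Y).R := by
  rw [R_add_s12]; exact List.mem_append_right _ (List.mem_map_of_mem hX')

theorem key_rev (G A B G' : SG) (hA : A ∈ G.L) (hB : B ∈ A.R) (hrev : G.Ge B)
    (hne : B.L ≠ []) (hL : G'.L = B.L ++ G.L.erase A) (hR : G'.R = G.R)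
    (hra : G'.ra = G.ra) (X : SG) (hX : X.Guaranteed) :
    Ls (G'.add X) = Ls (G.add X) ∧ Rs (G'.add X) = Rs (G.add X) := by
  have hGLne : G.L ≠ [] := List.ne_nil_of_mem hA
  have hG'Lne : G'.L ≠ [] := by rw [hL]; simp [hne]
  have hGXLne : (G.add X).L ≠ [] := by
    rw [L_add_s12]; simp [hGLne]
  have hG'XLne : (G'.add X).L ≠ [] := by
    rw [L_add_s12]; simp [hG'Lne]
  constructor
  · -- Ls equality
    apply le_antisymm
    · -- Ls (G' + X) ≤ Ls (G + X)
      apply Ls_le hG'XLne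
      intro y hy
      rw [L_add_s12] at hy
      rcases List.mem_append.1 hy with hy | hy
      · obtain ⟨C, hC, rfl⟩ := List.mem_map.1 hy
        rw [hL] at hC
        rcases List.mem_append.1 hC with hC | hC
        · calc Rs (C.add X) ≤ Ls (B.add X) := Rs_le_Ls (memL_addl X hC)
            _ ≤ Ls (G.add X) := (hrev X hX).1
        · exact Rs_le_Ls (memL_addl X (List.erase_subset hC))
      · obtain ⟨X', hX', rfl⟩ := List.mem_map.1 hy
        have IH := (key_rev G A B G' hA hB hrev hne hL hR hra X' (hX.memL hX')).2
        calc Rs (G'.add X') = Rs (G.add X') := IH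
          _ ≤ Ls (G.add X) := Rs_le_Ls (memL_addr G hX')
    · -- Ls (G + X) ≤ Ls (G' + X)
      apply Ls_le hGXLne
      intro y hy
      rw [L_add_s12] at hy
      rcases List.mem_append.1 hy with hy | hy
      · obtain ⟨C, hC, rfl⟩ := List.mem_map.1 hy
        by_cases hCA : C = A
        · have h1 : Rs (C.add X) ≤ Ls (B.add X) :=
            Rs_le (memR_addl X (show B ∈ C.R by rw [hCA]; exact hB))
          refine h1.trans (Ls_le (by rw [L_add_s12]; simp [hne]) ?_)
          intro z hz
          rw [L_add_s12] at hz
          rcases List.mem_append.1 hz with hz | hz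
          · obtain ⟨B', hB', rfl⟩ := List.mem_map.1 hz
            exact Rs_le_Ls (memL_addl X (by rw [hL]; exact List.mem_append_left _ hB'))
          · obtain ⟨X', hX', rfl⟩ := List.mem_map.1 hz
            have IH := (key_rev G A B G' hA hB hrev hne hL hR hra X' (hX.memL hX')).2
            calc Rs (B.add X') ≤ Rs (G.add X') := (hrev X' (hX.memL hX')).2
              _ = Rs (G'.add X') := IH.symm
              _ ≤ Ls (G'.add X) := Rs_le_Ls (memL_addr G' hX')
        · have hC' : C ∈ G'.L := by
            rw [hL]; exact List.mem_append_right _ ((List.mem_erase_of_ne hCA).2 hC)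
          exact Rs_le_Ls (memL_addl X hC')
      · obtain ⟨X', hX', rfl⟩ := List.mem_map.1 hy
        have IH := (key_rev G A B G' hA hB hrev hne hL hR hra X' (hX.memL hX')).2
        calc Rs (G.add X') = Rs (G'.add X') := IH.symm
          _ ≤ Ls (G'.add X) := Rs_le_Ls (memL_addr G' hX')
  · -- Rs equality
    by_cases hRe : G.R = [] ∧ X.R = []
    · have h1 : (G.add X).R = [] := by rw [R_add_s12, hRe.1, hRe.2]; rfl
      have h2 : (G'.add X).R = [] := by rw [R_add_s12, hR, hRe.1, hRe.2]; rfl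
      rw [Rs_atom h1, Rs_atom h2, ra_add_s12, ra_add_s12, hra]
    · have hne1 : (G.add X).R ≠ [] := by
        rw [R_add_s12]
        intro h
        rcases List.append_eq_nil_iff.1 h with ⟨h1, h2⟩
        exact hRe ⟨List.map_eq_nil_iff.1 h1, List.map_eq_nil_iff.1 h2⟩
      have hne2 : (G'.add X).R ≠ [] := by
        rw [R_add_s12, hR]
        intro h
        rcases List.append_eq_nil_iff.1 h with ⟨h1, h2⟩
        exact hRe ⟨List.map_eq_nil_iff.1 h1, List.map_eq_nil_iff.1 h2⟩
      apply le_antisymm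
      · apply le_Rs hne1
        intro y hy
        rw [R_add_s12] at hy
        rcases List.mem_append.1 hy with hy | hy
        · obtain ⟨D, hD, rfl⟩ := List.mem_map.1 hy
          exact Rs_le (memR_addl X (by rw [hR]; exact hD))
        · obtain ⟨X', hX', rfl⟩ := List.mem_map.1 hy
          have IH := (key_rev G A B G' hA hB hrev hne hL hR hra X' (hX.memR hX')).1
          calc Rs (G'.add X) ≤ Ls (G'.add X') := Rs_le (memR_addr G' hX')
            _ = Ls (G.add X') := IH
      · apply le_Rs hne2
        intro y hy
        rw [R_add_s12, hR] at hy
        rcases List.mem_append.1 hy with hy | hy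
        · obtain ⟨D, hD, rfl⟩ := List.mem_map.1 hy
          exact Rs_le (memR_addl X hD)
        · obtain ⟨X', hX', rfl⟩ := List.mem_map.1 hy
          have IH := (key_rev G A B G' hA hB hrev hne hL hR hra X' (hX.memR hX')).1
          calc Rs (G.add X) ≤ Ls (G.add X') := Rs_le (memR_addr G hX')
            _ = Ls (G'.add X') := IH.symm
termination_by sizeOf X
decreasing_by all_goals first
  | exact sizeOf_L_lt (by assumption)
  | exact sizeOf_R_lt (by assumption)


/-- Reversibility 1: bypassing a reversible Left option through a reversing
option with a nonempty replacement set. -/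
theorem reversibility_nonatomic (G A B : SG) (hG : G.Guaranteed) (hA : A ∈ G.L)
    (hB : B ∈ A.R) (hrev : G.Ge B) (hne : B.L ≠ []) :
    G.Equiv (SG.mk G.la G.ra (B.L ++ G.L.erase A) G.R) := by
  have hk := key_rev G A B (SG.mk G.la G.ra (B.L ++ G.L.erase A) G.R) hA hB hrev hne
    (by rfl) (by rfl) (by rfl)
  constructor
  · intro X hX
    exact ⟨(hk X hX).1.le, (hk X hX).2.le⟩
  · intro X hX
    exact ⟨(hk X hX).1.ge, (hk X hX).2.ge⟩

end SG
end
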